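/- Let p be a prime, n ≥ 1, Γ a complete set of representatives of ℤ^n/pℤ^n containing 0 with Γ' = Γ \ {0}. Let R : ℝ → ℂ be a smooth 1-D refinement mask with dilation p (R(0) = 1) whose flatness number is at least m, i.e., the k-th derivative of 1 − R vanishes at 0 for all 0 ≤ k ≤ m − 1. Then the flatness number of C_{n,p}[R] is at least m: for every multi-index μ ∈ ℕ^n with 0 ≤ |μ| ≤ m − 1, the partial derivative D^μ (1 − C_{n,p}[R]) vanishes at the origin 0 ∈ ℝ^n. -/

import Mathlib

open scoped Real Classical

lemma aux_iteratedFDeriv_zero_of_iteratedDeriv_zero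
    {F : Type*} [NormedAddCommGroup F] [NormedSpace ℝ F]
    (g : ℝ → F) (k : ℕ) (h : iteratedDeriv k g 0 = 0) :
    iteratedFDeriv ℝ k g 0 = 0 := by
  refine ContinuousMultilinearMap.ext (fun m => ?_)
  calc (iteratedFDeriv ℝ k g 0) m
      = (iteratedFDeriv ℝ k g 0) (fun i => m i • (1:ℝ)) := by simp
    _ = (∏ i, m i) • (iteratedFDeriv ℝ k g 0) (fun _ => 1) :=
        (iteratedFDeriv ℝ k g 0).map_smul_univ m (fun _ => 1)
    _ = 0 := by rw [← iteratedDeriv_eq_iteratedFDeriv, h]; simp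

/-- **Flatness of the prime coset sum (Lemma 4).**  If the smooth 1-D refinement mask `R`
with dilation `p` has flatness number at least `m` (all derivatives of `1 - R` of order
`≤ m - 1` vanish at `0`), then the flatness number of `C_{n,p}[R]` is at least `m`:
all (partial) derivatives of `1 - C_{n,p}[R]` of order `≤ m - 1` vanish at the origin. -/
theorem primeCosetSum_flatness
    (n : ℕ) (hn : 1 ≤ n) (p : ℕ) (hp : p.Prime)
    (Γ : Finset (Fin n → ℤ)) (hΓ0 : (0 : Fin n → ℤ) ∈ Γ)
    (hΓ : ∀ k : Fin n → ℤ, ∃! ν : Fin n → ℤ,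
      ν ∈ Γ ∧ ∃ m : Fin n → ℤ, k = ν + (p : ℤ) • m)
    (R : ℝ → ℂ) (hR0 : R 0 = 1)
    (hRsmooth : ∀ k : ℕ, ContDiff ℝ k R)
    (m : ℕ) (hm : 1 ≤ m)
    (hflat : ∀ k : ℕ, k ≤ m - 1 → iteratedDeriv k (fun ξ : ℝ => 1 - R ξ) 0 = 0)
    (C : (Fin n → ℝ) → ℂ)
    (hC : ∀ ω : Fin n → ℝ, C ω = (1 / (((p : ℂ) - 1) * (p : ℂ) ^ (n - 1))) *
      (1 - (p : ℂ) ^ (n - 1) + ∑ ν ∈ Γ.erase 0, R (∑ i, ω i * (ν i : ℝ)))) :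
    ∀ k : ℕ, k ≤ m - 1 →
      iteratedFDeriv ℝ k (fun ω : Fin n → ℝ => 1 - C ω) 0 = 0 := by
  haveI : NeZero p := ⟨hp.pos.ne'⟩
  -- Step 1: cardinality of Γ is p^n
  have hcard : Γ.card = p ^ n := by
    have h1 : Γ.card = (Finset.univ : Finset (Fin n → ZMod p)).card := by
      apply Finset.card_bij (fun ν _ => fun i => ((ν i : ℤ) : ZMod p))
      · intro a ha; exact Finset.mem_univ _
      · intro a₁ ha₁ a₂ ha₂ h
        have hd : ∀ i, (p : ℤ) ∣ a₁ i - a₂ i := by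
          intro i
          have hi := congrFun h i
          rw [← sub_eq_zero] at hi
          rw [← ZMod.intCast_zmod_eq_zero_iff_dvd]
          push_cast
          exact hi
        obtain ⟨ν, -, huniq⟩ := hΓ a₁
        have e1 : a₁ = ν := huniq a₁ ⟨ha₁, 0, by simp⟩
        have e2 : a₂ = ν := by
          refine huniq a₂ ⟨ha₂, fun i => (a₁ i - a₂ i) / p, ?_⟩
          funext i
          simp only [Pi.add_apply, Pi.smul_apply, smul_eq_mul]
          rw [Int.mul_ediv_cancel' (hd i)]
          ring
        rw [e1, e2]
      · intro b _
        obtain ⟨ν, ⟨hνΓ, m0, hk⟩, -⟩ := hΓ (fun i => ((b i).val : ℤ))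
        refine ⟨ν, hνΓ, ?_⟩
        funext i
        have h1 := congrFun hk i
        simp only [Pi.add_apply, Pi.smul_apply, smul_eq_mul] at h1
        have h2 : ((((b i).val : ℤ)) : ZMod p) = ((ν i : ℤ) : ZMod p) := by
          rw [h1]; push_cast; simp
        rw [← h2]
        push_cast
        exact ZMod.natCast_rightInverse (b i)
    rw [h1, Finset.card_univ]
    simp [ZMod.card]
  have hcard' : (Γ.erase 0).card = p ^ n - 1 := by
    rw [Finset.card_erase_of_mem hΓ0, hcard]
  -- basic nonvanishing facts
  have hp1 : ((p : ℂ) - 1) ≠ 0 := by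
    rw [sub_ne_zero]
    intro h
    have : p = 1 := by exact_mod_cast h
    exact hp.one_lt.ne' this
  have hp2 : ((p : ℂ)) ^ (n - 1) ≠ 0 :=
    pow_ne_zero _ (Nat.cast_ne_zero.mpr hp.pos.ne')
  set c : ℂ := 1 / (((p : ℂ) - 1) * (p : ℂ) ^ (n - 1)) with hc
  set g : ℝ → ℂ := fun ξ => 1 - R ξ with hgdef
  set L : (Fin n → ℤ) → ((Fin n → ℝ) →L[ℝ] ℝ) :=
    fun ν => ∑ i, ((ν i : ℝ)) • ContinuousLinearMap.proj i with hLdef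
  have hL : ∀ ν (ω : Fin n → ℝ), L ν ω = ∑ i, ω i * (ν i : ℝ) := by
    intro ν ω
    simp [hLdef, ContinuousLinearMap.sum_apply, mul_comm]
  -- Step 2: rewrite 1 - C as a sum
  have hfun : (fun ω : Fin n → ℝ => 1 - C ω)
      = fun ω => ∑ ν ∈ Γ.erase 0, (c • (g ∘ L ν)) ω := by
    funext ω
    simp only [Pi.smul_apply, Function.comp_apply, hgdef, smul_eq_mul, hL]
    rw [hC ω, ← Finset.mul_sum, Finset.sum_sub_distrib, Finset.sum_const, hcard']
    have hposn : 1 ≤ p ^ n := Nat.one_le_pow _ _ hp.pos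
    have hPn : ((p : ℂ)) ^ n = (p : ℂ) ^ (n - 1) * p := by
      rw [← pow_succ, Nat.sub_add_cancel hn]
    rw [nsmul_eq_mul]
    push_cast [Nat.cast_sub hposn]
    rw [hc]
    field_simp
    rw [hPn]
    ring
  -- Step 3: differentiate
  intro k hk
  have hg : ContDiff ℝ k g := contDiff_const.sub (hRsmooth k)
  have hcont : ∀ ν ∈ Γ.erase 0, ContDiff ℝ k (c • (g ∘ L ν)) := by
    intro ν _
    exact (hg.comp (L ν).contDiff).const_smul c
  have hgz : iteratedFDeriv ℝ k g 0 = 0 :=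
    aux_iteratedFDeriv_zero_of_iteratedDeriv_zero g k (hflat k hk)
  rw [hfun]
  have hsum := congrFun (iteratedFDeriv_sum (𝕜 := ℝ) (u := Γ.erase 0)
    (f := fun ν => c • (g ∘ L ν)) (i := k) hcont) 0
  rw [hsum, Finset.sum_apply]
  apply Finset.sum_eq_zero
  intro ν _
  show iteratedFDeriv ℝ k (c • (g ∘ L ν)) 0 = 0
  rw [iteratedFDeriv_const_smul_apply ((hg.comp (L ν).contDiff).contDiffAt)]
  rw [ContinuousLinearMap.iteratedFDeriv_comp_right (L ν) hg 0 le_rfl]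
  rw [map_zero, hgz]
  ext mm
  simp
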